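/- Let K = WithTop (ℕ ×ₗ ℕ) and L₂ = K × Bool with the componentwise lattice order. The maximal proper complete sublattices of L₂ are exactly the following sets: L₂ ∖ {((0,0), true)}, and L₂ ∖ {((n,m), false), ((n,m), true)} for natural numbers n, m with m ≥ 1. -/

import Mathlib

/-- A complete sublattice of a complete lattice: a subset closed under arbitrary
infima and suprema computed in `L` (including the empty ones, so it contains `⊤` and `⊥`). -/
def IsCompleteSublattice {L : Type*} [CompleteLattice L] (S : Set L) : Prop :=
  (∀ Y : Set L, Y ⊆ S → sInf Y ∈ S) ∧ (∀ Y : Set L, Y ⊆ S → sSup Y ∈ S)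

/-- The complete sublattice generated by `X`: the intersection of all complete
sublattices containing `X`. -/
def latGen {L : Type*} [CompleteLattice L] (X : Set L) : Set L :=
  ⋂₀ {S : Set L | IsCompleteSublattice S ∧ X ⊆ S}

/-- `a` is a non-generator (w.r.t. complete-sublattice generation). -/
def IsLatNonGenerator {L : Type*} [CompleteLattice L] (a : L) : Prop :=
  ∀ X : Set L, latGen (X ∪ {a}) = Set.univ → latGen X = Set.univ

/-- A maximal proper complete sublattice. -/
def IsMaxProperSublattice {L : Type*} [CompleteLattice L] (P : Set L) : Prop :=
  IsCompleteSublattice P ∧ P ≠ Set.univ ∧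
    ∀ Q : Set L, IsCompleteSublattice Q → Q ≠ Set.univ → P ⊆ Q → P = Q

/-- `ℕ ×ₗ ℕ` is a well-order, hence conditionally complete with bottom;
this makes `WithTop (ℕ ×ₗ ℕ)` a complete lattice of order type `ω² + 1`. -/
noncomputable instance : ConditionallyCompleteLinearOrderBot (ℕ ×ₗ ℕ) :=
  WellFoundedLT.conditionallyCompleteLinearOrderBot _

namespace MaxP
def kc (n m : ℕ) : WithTop (ℕ ×ₗ ℕ) := ((toLex (n, m) : ℕ ×ₗ ℕ) : WithTop (ℕ ×ₗ ℕ))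
abbrev L2 := WithTop (ℕ ×ₗ ℕ) × Bool

lemma kc_le_kc {n m p q : ℕ} : kc n m ≤ kc p q ↔ n < p ∨ (n = p ∧ m ≤ q) := by
  rw [kc, kc, WithTop.coe_le_coe]; exact Prod.Lex.toLex_le_toLex (x := (n, m)) (y := (p, q))

lemma kc_inj {n m p q : ℕ} (h : kc n m = kc p q) : n = p ∧ m = q := by
  have h1 := kc_le_kc.mp h.le; have h2 := kc_le_kc.mp h.ge; omega

-- Bool component lemmas
lemma sSup_snd_true {Y : Set L2} : (sSup Y).2 = true ↔ ∃ y ∈ Y, y.2 = true := by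
  constructor
  · intro h
    by_contra hc; push_neg at hc
    have : (sSup Y).2 ≤ false := by
      rw [Prod.snd_sSup]
      apply sSup_le; rintro b ⟨y, hy, rfl⟩
      cases hb : y.2 with
      | false => exact le_rfl
      | true => exact absurd hb (hc y hy)
    rw [h] at this; exact absurd this (by decide)
  · rintro ⟨y, hy, hyt⟩
    have := (le_sSup hy).2
    rw [hyt] at this
    exact le_antisymm (le_top) this
lemma sSup_snd_false {Y : Set L2} (h : ∀ y ∈ Y, y.2 = false) : (sSup Y).2 = false := by
  cases hb : (sSup Y).2 with
  | false => rfl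
  | true => obtain ⟨y, hy, hyt⟩ := sSup_snd_true.mp hb; exact absurd (h y hy) (by simp [hyt])
lemma sInf_snd_true {Y : Set L2} : (sInf Y).2 = true ↔ ∀ y ∈ Y, y.2 = true := by
  constructor
  · intro h y hy
    have := (sInf_le hy).2
    rw [h] at this
    exact le_antisymm le_top this
  · intro h
    have : (true : Bool) ≤ (sInf Y).2 := by
      rw [Prod.snd_sInf]
      apply le_sInf; rintro b ⟨y, hy, rfl⟩; rw [h y hy]
    exact le_antisymm le_top this

lemma top_L2 : (⊤ : L2) = (⊤, true) := rfl
lemma bot_L2 : (⊥ : L2) = (⊥, false) := rfl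

lemma kc_ne_top (n m : ℕ) : kc n m ≠ ⊤ := WithTop.coe_ne_top

lemma lt_succ_iff (x : WithTop (ℕ ×ₗ ℕ)) (n m : ℕ) : x < kc n (m+1) ↔ x ≤ kc n m := by
  cases x with
  | top =>
    simp only [kc]
    constructor
    · intro h; exact absurd h (not_top_lt)
    · intro h; exact absurd (top_le_iff.mp h) WithTop.coe_ne_top
  | coe a =>
    rw [kc, kc, WithTop.coe_lt_coe, WithTop.coe_le_coe]
    have h1 := Prod.Lex.toLex_lt_toLex (x := ofLex a) (y := (n, m+1))
    have h2 := Prod.Lex.toLex_le_toLex (x := ofLex a) (y := (n, m))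
    simp only [toLex_ofLex] at h1 h2
    rw [h1, h2]; omega

lemma bot_K : (⊥ : WithTop (ℕ ×ₗ ℕ)) = kc 0 0 := by
  apply le_antisymm bot_le
  rw [kc, ← WithTop.coe_bot, WithTop.coe_le_coe]
  have h := Prod.Lex.toLex_le_toLex (x := ((0 : ℕ), (0 : ℕ))) (y := ofLex (⊥ : ℕ ×ₗ ℕ))
  simp only [toLex_ofLex] at h
  exact h.mpr (by omega)

lemma kInf_mem {S : Set (WithTop (ℕ ×ₗ ℕ))} (h : S.Nonempty) : sInf S ∈ S := by
  have wf : WellFoundedLT (WithTop (ℕ ×ₗ ℕ)) := inferInstance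
  have hm := WellFounded.min_mem wf.wf S h
  have : sInf S = wf.wf.min S h := le_antisymm (sInf_le hm)
    (le_sInf fun b hb => le_of_not_gt (WellFounded.not_lt_min wf.wf S hb))
  rw [this]; exact hm

lemma kSup_column (n : ℕ) : sSup (Set.range fun j => kc n j) = kc (n+1) 0 := by
  apply le_antisymm
  · apply sSup_le; rintro x ⟨j, rfl⟩; rw [kc_le_kc]; omega
  · cases hdec : sSup (Set.range fun j => kc n j) with
    | top => exact le_top
    | coe a =>
      have h2 : kc n ((ofLex a).2 + 1) ≤ (a : WithTop (ℕ ×ₗ ℕ)) :=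
        hdec ▸ le_sSup ⟨(ofLex a).2 + 1, rfl⟩
      rw [kc, WithTop.coe_le_coe] at h2
      have h3 := Prod.Lex.toLex_le_toLex (x := (n, (ofLex a).2 + 1)) (y := ofLex a)
      simp only [toLex_ofLex] at h3
      rw [h3] at h2
      rw [kc, WithTop.coe_le_coe]
      have h4 := Prod.Lex.toLex_le_toLex (x := (n+1, 0)) (y := ofLex a)
      simp only [toLex_ofLex] at h4
      rw [h4]; omega

-- the candidate sets
def P0 : Set L2 := Set.univ \ {(kc 0 0, true)}
def Pnm (n m : ℕ) : Set L2 := Set.univ \ {(kc n m, false), (kc n m, true)}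

lemma mem_P0 {x : L2} : x ∈ P0 ↔ x ≠ (kc 0 0, true) := by simp [P0]
lemma mem_Pnm {x : L2} {n m : ℕ} : x ∈ Pnm n m ↔ x ≠ (kc n m, false) ∧ x ≠ (kc n m, true) := by
  simp [Pnm, not_or]

lemma isCS_P0 : IsCompleteSublattice P0 := by
  constructor
  · intro Y hY
    rw [mem_P0]
    intro hEq
    rcases Set.eq_empty_or_nonempty Y with rfl | hne
    · rw [sInf_empty] at hEq
      have : (⊤ : WithTop (ℕ ×ₗ ℕ)) = kc 0 0 := congrArg Prod.fst hEq
      exact kc_ne_top 0 0 this.symm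
    · have hall : ∀ y ∈ Y, y.2 = true := sInf_snd_true.mp (by rw [hEq])
      have hf : sInf (Prod.fst '' Y) = kc 0 0 := by rw [← Prod.fst_sInf, hEq]
      have hmem := kInf_mem (hne.image Prod.fst)
      rw [hf] at hmem
      obtain ⟨y, hy, hy1⟩ := hmem
      have hyeq : y = (kc 0 0, true) := Prod.ext hy1 (hall y hy)
      exact (mem_P0.mp (hY hy)) hyeq
  · intro Y hY
    rw [mem_P0]
    intro hEq
    obtain ⟨y, hy, hyt⟩ := sSup_snd_true.mp (by rw [hEq])
    have h1 : y.1 ≤ kc 0 0 := by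
      have := (le_sSup hy).1; rwa [hEq] at this
    have h2 : y.1 = kc 0 0 := le_antisymm h1 (bot_K ▸ bot_le)
    exact (mem_P0.mp (hY hy)) (Prod.ext h2 hyt)

lemma isCS_Pnm (n m : ℕ) : IsCompleteSublattice (Pnm n (m+1)) := by
  have key : ∀ y : L2, y ∈ Pnm n (m+1) → y.1 ≠ kc n (m+1) := by
    intro y hy hy1
    rcases mem_Pnm.mp hy with ⟨h1, h2⟩
    cases hb : y.2 with
    | false => exact h1 (Prod.ext hy1 hb)
    | true => exact h2 (Prod.ext hy1 hb)
  constructor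
  · intro Y hY
    rw [mem_Pnm]
    constructor <;> intro hEq <;>
    · have hf1 : (sInf Y).1 = kc n (m+1) := by rw [hEq]
      rcases Set.eq_empty_or_nonempty Y with rfl | hne
      · rw [sInf_empty] at hf1
        exact kc_ne_top n (m+1) hf1.symm
      · have hmem := kInf_mem (hne.image Prod.fst)
        rw [← Prod.fst_sInf, hf1] at hmem
        obtain ⟨y, hy, hy1⟩ := hmem
        exact key y (hY hy) hy1
  · intro Y hY
    rw [mem_Pnm]
    constructor <;> intro hEq <;>
    · have hf1 : (sSup Y).1 = kc n (m+1) := by rw [hEq]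
      have hub : ∀ y ∈ Y, y.1 ≤ kc n m := by
        intro y hy
        rw [← lt_succ_iff]
        apply lt_of_le_of_ne _ (key y (hY hy))
        have := (le_sSup hy).1; rwa [hf1] at this
      have : (sSup Y).1 ≤ kc n m := by
        rw [Prod.fst_sSup]
        apply sSup_le; rintro b ⟨y, hy, rfl⟩; exact hub y hy
      rw [hf1, kc_le_kc] at this; omega

lemma pair_sup (k : WithTop (ℕ ×ₗ ℕ)) :
    sSup {((k, false) : L2), (kc 0 0, true)} = (k, true) := by
  rw [sSup_pair, Prod.mk_sup_mk, ← bot_K, sup_bot_eq]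
  congr 1

lemma pair_inf (k : WithTop (ℕ ×ₗ ℕ)) :
    sInf {((k, true) : L2), ((⊤ : WithTop (ℕ ×ₗ ℕ)), false)} = (k, false) := by
  rw [sInf_pair, Prod.mk_inf_mk, inf_top_eq]
  congr 1


lemma univ_of_P0_and {Q : Set L2} (hs : P0 ⊆ Q) (h : (kc 0 0, true) ∈ Q) : Q = Set.univ := by
  apply Set.eq_univ_iff_forall.mpr
  intro z
  by_cases hz : z = (kc 0 0, true)
  · exact hz ▸ h
  · exact hs (mem_P0.mpr hz)

lemma univ_of_Pnm_and {n m : ℕ} {Q : Set L2} (hs : Pnm n m ⊆ Q)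
    (h1 : (kc n m, false) ∈ Q) (h2 : (kc n m, true) ∈ Q) : Q = Set.univ := by
  apply Set.eq_univ_iff_forall.mpr
  intro z
  by_cases hz1 : z = (kc n m, false)
  · exact hz1 ▸ h1
  by_cases hz2 : z = (kc n m, true)
  · exact hz2 ▸ h2
  exact hs (mem_Pnm.mpr ⟨hz1, hz2⟩)

lemma P0_ne_univ : P0 ≠ Set.univ := by
  intro h
  have : (kc 0 0, true) ∈ P0 := h ▸ Set.mem_univ _
  exact (mem_P0.mp this) rfl

lemma Pnm_ne_univ (n m : ℕ) : Pnm n m ≠ Set.univ := by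
  intro h
  have : ((kc n m, true) : L2) ∈ Pnm n m := h ▸ Set.mem_univ _
  exact (mem_Pnm.mp this).2 rfl

lemma max_P0 : IsMaxProperSublattice P0 := by
  refine ⟨isCS_P0, P0_ne_univ, fun Q hQ hQne hsub => ?_⟩
  apply Set.Subset.antisymm hsub
  intro x hx
  rw [mem_P0]
  rintro rfl
  exact hQne (univ_of_P0_and hsub hx)

lemma max_Pnm (n m : ℕ) : IsMaxProperSublattice (Pnm n (m+1)) := by
  refine ⟨isCS_Pnm n m, Pnm_ne_univ n (m+1), fun Q hQ hQne hsub => ?_⟩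
  apply Set.Subset.antisymm hsub
  intro x hx
  rw [mem_Pnm]
  have hbt : ((kc 0 0, true) : L2) ∈ Q := by
    apply hsub; rw [mem_Pnm]
    constructor
    · intro h; exact Bool.noConfusion (congrArg Prod.snd h)
    · intro h
      have := kc_inj (congrArg Prod.fst h); omega
  have htf : (((⊤ : WithTop (ℕ ×ₗ ℕ)), false) : L2) ∈ Q := by
    apply hsub; rw [mem_Pnm]
    constructor
    · intro h; exact kc_ne_top n (m+1) (congrArg Prod.fst h).symm
    · intro h; exact Bool.noConfusion (congrArg Prod.snd h)
  constructor
  · rintro rfl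
    -- (kc n (m+1), false) ∈ Q; derive true version via sup
    have htrue : ((kc n (m+1), true) : L2) ∈ Q := by
      have := hQ.2 {((kc n (m+1), false) : L2), (kc 0 0, true)}
        (Set.insert_subset_iff.mpr ⟨hx, Set.singleton_subset_iff.mpr hbt⟩)
      rwa [pair_sup] at this
    exact hQne (univ_of_Pnm_and hsub hx htrue)
  · rintro rfl
    have hfalse : ((kc n (m+1), false) : L2) ∈ Q := by
      have := hQ.1 {((kc n (m+1), true) : L2), ((⊤ : WithTop (ℕ ×ₗ ℕ)), false)}
        (Set.insert_subset_iff.mpr ⟨hx, Set.singleton_subset_iff.mpr htf⟩)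
      rwa [pair_inf] at this
    exact hQne (univ_of_Pnm_and hsub hfalse hx)

lemma forward {P : Set L2} (hP : IsMaxProperSublattice P) :
    P = P0 ∨ ∃ n m : ℕ, 1 ≤ m ∧ P = Pnm n m := by
  by_contra hcon
  push_neg at hcon
  obtain ⟨h0, hnm⟩ := hcon
  obtain ⟨hCS, hne, hmax⟩ := hP
  have hbt : ((kc 0 0, true) : L2) ∈ P := by
    by_contra h
    exact h0 (hmax P0 isCS_P0 P0_ne_univ (fun x hx => mem_P0.mpr (fun he => h (he ▸ hx))))
  have hsucc : ∀ n m : ℕ, ((kc n (m+1), false) : L2) ∈ P ∨ ((kc n (m+1), true) : L2) ∈ P := by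
    intro n m
    by_contra h
    push_neg at h
    exact hnm n (m+1) (Nat.le_add_left 1 m)
      (hmax (Pnm n (m+1)) (isCS_Pnm n m) (Pnm_ne_univ n (m+1))
        (fun x hx => mem_Pnm.mpr ⟨fun he => h.1 (he ▸ hx), fun he => h.2 (he ▸ hx)⟩))
  have hup : ∀ k : WithTop (ℕ ×ₗ ℕ), ((k, false) : L2) ∈ P → ((k, true) : L2) ∈ P := by
    intro k hk
    have := hCS.2 {((k, false) : L2), (kc 0 0, true)}
      (Set.insert_subset_iff.mpr ⟨hk, Set.singleton_subset_iff.mpr hbt⟩)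
    rwa [pair_sup] at this
  have hsucct : ∀ n m : ℕ, ((kc n (m+1), true) : L2) ∈ P :=
    fun n m => (hsucc n m).elim (hup _) id
  have hcol : ∀ p : ℕ, ((kc p 0, true) : L2) ∈ P := by
    intro p
    induction p with
    | zero => exact hbt
    | succ q ih =>
      have hsub : Set.range (fun j => ((kc q j, true) : L2)) ⊆ P := by
        rintro x ⟨j, rfl⟩
        cases j with
        | zero => exact ih
        | succ j' => exact hsucct q j'
      have hmem := hCS.2 _ hsub
      have heq : sSup (Set.range fun j => ((kc q j, true) : L2)) = (kc (q+1) 0, true) := by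
        apply Prod.ext
        · rw [Prod.fst_sSup]
          have himg : Prod.fst '' Set.range (fun j => ((kc q j, true) : L2))
              = Set.range fun j => kc q j := by
            rw [← Set.range_comp]; rfl
          rw [himg, kSup_column]
        · exact sSup_snd_true.mpr ⟨(kc q 0, true), ⟨0, rfl⟩, rfl⟩
      rwa [heq] at hmem
  have htrue : ∀ k : WithTop (ℕ ×ₗ ℕ), ((k, true) : L2) ∈ P := by
    intro k
    cases k with
    | top =>
      have := hCS.1 ∅ (Set.empty_subset P)
      rwa [sInf_empty] at this
    | coe a =>
      have ha : (a : WithTop (ℕ ×ₗ ℕ)) = kc (ofLex a).1 (ofLex a).2 := by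
        simp [kc]
      rw [ha]
      cases hm : (ofLex a).2 with
      | zero => exact hcol _
      | succ m' => exact hsucct _ _
  have htf : (((⊤ : WithTop (ℕ ×ₗ ℕ)), false) : L2) ∉ P := by
    intro h
    apply hne
    apply Set.eq_univ_iff_forall.mpr
    intro z
    cases hz : z.2 with
    | true =>
      have := htrue z.1
      rwa [← hz, Prod.mk.eta] at this
    | false =>
      have := hCS.1 {((z.1, true) : L2), ((⊤ : WithTop (ℕ ×ₗ ℕ)), false)}
        (Set.insert_subset_iff.mpr ⟨htrue z.1, Set.singleton_subset_iff.mpr h⟩)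
      rw [pair_inf] at this
      rwa [← hz, Prod.mk.eta] at this
  set F : Set (WithTop (ℕ ×ₗ ℕ)) := {k | ((k, false) : L2) ∈ P} with hF
  have hsF : sSup F ∈ F := by
    have hsub : (fun k => ((k, false) : L2)) '' F ⊆ P := by rintro x ⟨k, hk, rfl⟩; exact hk
    have hmem := hCS.2 _ hsub
    have heq : sSup ((fun k => ((k, false) : L2)) '' F) = (sSup F, false) := by
      apply Prod.ext
      · rw [Prod.fst_sSup, Set.image_image]
        simp
      · apply sSup_snd_false; rintro y ⟨k, hk, rfl⟩; rfl
    rwa [heq] at hmem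
  have hsne : sSup F ≠ ⊤ := fun h => htf (h ▸ hsF)
  obtain ⟨a, ha⟩ := WithTop.ne_top_iff_exists.mp hsne
  have hsa : sSup F = kc (ofLex a).1 (ofLex a).2 := by rw [← ha]; simp [kc]
  set s' := kc (ofLex a).1 ((ofLex a).2 + 1) with hs'
  have hs'F : s' ∉ F := by
    intro h
    have hle : s' ≤ sSup F := le_sSup h
    rw [hsa, hs', kc_le_kc] at hle
    omega
  set P' : Set L2 := {x | x.2 = true ∨ x.1 ≤ s'} with hP'
  have hsub' : P ⊆ P' := by
    intro x hx
    cases hx2 : x.2 with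
    | true => exact Or.inl hx2
    | false =>
      refine Or.inr ?_
      have hxF : x.1 ∈ F := by
        rw [hF]
        show ((x.1, false) : L2) ∈ P
        rw [← hx2, Prod.mk.eta]
        exact hx
      calc x.1 ≤ sSup F := le_sSup hxF
        _ ≤ s' := by rw [hsa, hs']; exact kc_le_kc.mpr (Or.inr ⟨rfl, Nat.le_succ _⟩)
  have hCS' : IsCompleteSublattice P' := by
    constructor
    · intro Y hY
      by_cases hall : ∀ y ∈ Y, y.2 = true
      · exact Or.inl (sInf_snd_true.mpr hall)
      · push_neg at hall
        obtain ⟨y, hy, hy2⟩ := hall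
        refine Or.inr ?_
        rcases hY hy with h | h
        · exact absurd h hy2
        · exact le_trans (sInf_le hy).1 h
    · intro Y hY
      by_cases hex : ∃ y ∈ Y, y.2 = true
      · exact Or.inl (sSup_snd_true.mpr hex)
      · push_neg at hex
        refine Or.inr ?_
        rw [Prod.fst_sSup]
        apply sSup_le
        rintro b ⟨y, hy, rfl⟩
        rcases hY hy with h | h
        · exact absurd h (hex y hy)
        · exact h
  have hne' : P' ≠ Set.univ := by
    intro h
    have hmem : (((⊤ : WithTop (ℕ ×ₗ ℕ)), false) : L2) ∈ P' := h ▸ Set.mem_univ _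
    rcases hmem with h1 | h1
    · exact Bool.noConfusion h1
    · exact kc_ne_top (ofLex a).1 ((ofLex a).2 + 1) (top_le_iff.mp h1)
  have heq' := hmax P' hCS' hne' hsub'
  have : ((s', false) : L2) ∈ P := by rw [heq']; exact Or.inr le_rfl
  exact hs'F this
end MaxP


/-- The maximal proper complete sublattices of `L₂ = (WithTop (ℕ ×ₗ ℕ)) × Bool` are
exactly `L₂ \ {((0,0), true)}` and `L₂ \ {((n,m), false), ((n,m), true)}` for `m ≥ 1`. -/
theorem maxProper_L2_classification :
    ∀ P : Set (WithTop (ℕ ×ₗ ℕ) × Bool),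
      IsMaxProperSublattice P ↔
        (P = Set.univ \ {(((toLex (0, 0) : ℕ ×ₗ ℕ) : WithTop (ℕ ×ₗ ℕ)), true)} ∨
          ∃ n m : ℕ, 1 ≤ m ∧
            P = Set.univ \
              {(((toLex (n, m) : ℕ ×ₗ ℕ) : WithTop (ℕ ×ₗ ℕ)), false),
               (((toLex (n, m) : ℕ ×ₗ ℕ) : WithTop (ℕ ×ₗ ℕ)), true)}) := by
  
  intro P
  constructor
  · intro h
    rcases MaxP.forward h with h0 | ⟨n, m, hm, hP⟩
    · exact Or.inl h0
    · exact Or.inr ⟨n, m, hm, hP⟩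
  · rintro (rfl | ⟨n, m, hm, rfl⟩)
    · exact MaxP.max_P0
    · obtain ⟨m', rfl⟩ : ∃ m', m = m' + 1 := ⟨m - 1, by omega⟩
      exact MaxP.max_Pnm n m'
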